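/- arXiv:1307.5577 — 2 statements merged into one kernel-verified Lean document; each statement's English description precedes it below -/
import Mathlib

section
/- Let ω = (ω₀, …, ω_{n+1}) be a primitive algebraic key sequence. Then for each k with 1 ≤ k ≤ n, the integer β_{k,0} in the unique representation α_k·ω_k = Σ_{j=0}^{k−1} β_{k,j}·ω_j with 0 ≤ β_{k,j} < α_j for 1 ≤ j ≤ k−1 is nonnegative. -/
/-- `dks ω k` is `gcd(|ω₀|, …, |ω_k|)`. -/
def dks (ω : ℕ → ℤ) (k : ℕ) : ℕ :=
  (Finset.range (k + 1)).gcd fun j => (ω j).natAbs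

/-- `alphaK ω k` is `α_k = d_{k−1}/d_k`. -/
def alphaK (ω : ℕ → ℤ) (k : ℕ) : ℕ := dks ω (k - 1) / dks ω k

/-- A key sequence `(ω₀, …, ω_{n+1})`. -/
def IsKeySequence (n : ℕ) (ω : ℕ → ℤ) : Prop :=
  1 ≤ ω 0 ∧ dks ω (n + 1) = 1 ∧
    ∀ k, 1 ≤ k → k ≤ n → ω (k + 1) < (alphaK ω k : ℤ) * ω k

/-- A key sequence is primitive iff `ω_{n+1} > 0`. -/
def IsPrimitive (n : ℕ) (ω : ℕ → ℤ) : Prop := 0 < ω (n + 1)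

/-- A primitive key sequence is algebraic iff `α_k·ω_k` lies in the sub-semigroup of `ℤ`
generated by `ω₀, …, ω_{k−1}` (nonnegative integer combinations) for `1 ≤ k ≤ n`. -/
def IsAlgebraicKeySeq (n : ℕ) (ω : ℕ → ℤ) : Prop :=
  ∀ k, 1 ≤ k → k ≤ n → ∃ c : ℕ → ℕ,
    (alphaK ω k : ℤ) * ω k = ∑ j ∈ Finset.range k, (c j : ℤ) * ω j

lemma dks_succ (ω : ℕ → ℤ) (j : ℕ) :
    dks ω (j + 1) = Nat.gcd ((ω (j+1)).natAbs) (dks ω j) := by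
  unfold dks
  rw [Finset.range_add_one, Finset.gcd_insert]
  rfl

lemma dks_pos (ω : ℕ → ℤ) (hω0 : 1 ≤ ω 0) (k : ℕ) : 0 < dks ω k := by
  rcases Nat.eq_zero_or_pos (dks ω k) with h | h
  · exfalso
    have := Finset.gcd_eq_zero_iff.mp h 0 (by simp)
    simp at this
    omega
  · exact h

lemma dks_dvd (ω : ℕ → ℤ) (k i : ℕ) (h : i ≤ k) : (dks ω k : ℤ) ∣ ω i := by
  have := Finset.gcd_dvd (f := fun j => (ω j).natAbs) (Finset.mem_range.mpr (by omega : i < k + 1))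
  exact (Int.natCast_dvd_natCast.mpr this).trans (Int.natAbs_dvd.mpr dvd_rfl)

lemma dks_succ_dvd (ω : ℕ → ℤ) (j : ℕ) : dks ω (j + 1) ∣ dks ω j := by
  rw [dks_succ]; exact Nat.gcd_dvd_right _ _

lemma alpha_mul (ω : ℕ → ℤ) (hω0 : 1 ≤ ω 0) (j : ℕ) :
    alphaK ω (j + 1) * dks ω (j + 1) = dks ω j := by
  unfold alphaK
  simp only [Nat.add_sub_cancel]
  exact Nat.div_mul_cancel (dks_succ_dvd ω j)

lemma alpha_pos (ω : ℕ → ℤ) (hω0 : 1 ≤ ω 0) (j : ℕ) : 0 < alphaK ω (j + 1) := by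
  have h := alpha_mul ω hω0 j
  have := dks_pos ω hω0 j
  nlinarith [h, this]

/-- key divisibility: if d_{j} ∣ γ * ω_{j+1} and |γ| < α_{j+1} then γ = 0 -/
lemma gamma_zero (ω : ℕ → ℤ) (hω0 : 1 ≤ ω 0) (j : ℕ) (γ : ℤ)
    (hdvd : (dks ω j : ℤ) ∣ γ * ω (j + 1)) (hlt : γ.natAbs < alphaK ω (j + 1)) : γ = 0 := by
  set d := dks ω (j + 1) with hd
  have hdpos := dks_pos ω hω0 (j + 1)
  have hgcd : Nat.gcd (dks ω j) ((ω (j+1)).natAbs) = d := by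
    rw [hd, dks_succ, Nat.gcd_comm]
  -- natAbs version
  have hdvdN : dks ω j ∣ γ.natAbs * (ω (j+1)).natAbs := by
    have := Int.natAbs_dvd_natAbs.mpr hdvd
    simpa [Int.natAbs_mul] using this
  have hcop : Nat.Coprime (alphaK ω (j+1)) ((ω (j+1)).natAbs / d) := by
    have := Nat.coprime_div_gcd_div_gcd (m := dks ω j) (n := (ω (j+1)).natAbs) (hgcd ▸ hdpos)
    rw [hgcd] at this
    · unfold alphaK
      simpa using this
  have hω1d : d ∣ (ω (j+1)).natAbs := by rw [← hgcd]; exact Nat.gcd_dvd_right _ _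
  have halphad : alphaK ω (j+1) * d = dks ω j := alpha_mul ω hω0 j
  have hdvd2 : alphaK ω (j+1) * d ∣ γ.natAbs * ((ω (j+1)).natAbs / d * d) := by
    rw [halphad, Nat.div_mul_cancel hω1d]; exact hdvdN
  have hdvd3 : alphaK ω (j+1) ∣ γ.natAbs * ((ω (j+1)).natAbs / d) := by
    have : alphaK ω (j+1) * d ∣ (γ.natAbs * ((ω (j+1)).natAbs / d)) * d := by
      rw [mul_assoc]; exact hdvd2
    exact (Nat.mul_dvd_mul_iff_right hdpos).mp this
  have : alphaK ω (j+1) ∣ γ.natAbs := (Nat.Coprime.dvd_of_dvd_mul_right hcop) hdvd3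
  exact Int.natAbs_eq_zero.mp (Nat.eq_zero_of_dvd_of_lt this hlt)

/-- If a combination with small digits sums to zero, all coefficients vanish. -/
lemma sum_zero (ω : ℕ → ℤ) (hω0 : 1 ≤ ω 0) :
    ∀ m, ∀ γ : ℕ → ℤ, (∀ j, 1 ≤ j → j < m → (γ j).natAbs < alphaK ω j) →
      (∑ j ∈ Finset.range m, γ j * ω j) = 0 → ∀ j, j < m → γ j = 0 := by
  intro m
  induction m with
  | zero => intro γ _ _ j hj; omega
  | succ m ih =>
    intro γ hsmall hsum j hj
    rcases Nat.eq_zero_or_pos m with hm | hm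
    · subst hm
      interval_cases j
      simp [Finset.sum_range_one] at hsum
      rcases hsum with h | h
      · exact h
      · omega
    -- m ≥ 1 : first show γ m = 0
    obtain ⟨m', rfl⟩ : ∃ m', m = m' + 1 := ⟨m - 1, by omega⟩
    have hsum' : ∑ i ∈ Finset.range (m' + 1), γ i * ω i + γ (m' + 1) * ω (m' + 1) = 0 := by
      rw [← Finset.sum_range_succ]; exact hsum
    have hdvdsum : (dks ω m' : ℤ) ∣ ∑ i ∈ Finset.range (m' + 1), γ i * ω i := by
      apply Finset.dvd_sum
      intro i hi
      exact Dvd.dvd.mul_left (dks_dvd ω m' i (by simp at hi; omega)) _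
    have hdvd : (dks ω m' : ℤ) ∣ γ (m' + 1) * ω (m' + 1) := by
      have : γ (m' + 1) * ω (m' + 1) = -(∑ i ∈ Finset.range (m' + 1), γ i * ω i) := by linarith
      rw [this]; exact dvd_neg.mpr hdvdsum
    have hγm : γ (m' + 1) = 0 :=
      gamma_zero ω hω0 m' _ hdvd (hsmall (m' + 1) (by omega) (by omega))
    have hsum0 : ∑ i ∈ Finset.range (m' + 1), γ i * ω i = 0 := by
      rw [hγm] at hsum'; simpa using hsum'
    rcases Nat.lt_or_ge j (m' + 1) with hjm | hjm
    · exact ih γ (fun i h1 h2 => hsmall i h1 (by omega)) hsum0 j hjm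
    · have : j = m' + 1 := by omega
      rw [this]; exact hγm

/-- Any nonnegative representation can be reduced to one with digits < α. -/
lemma reduce (n : ℕ) (ω : ℕ → ℤ) (hω0 : 1 ≤ ω 0)
    (halg : ∀ k, 1 ≤ k → k ≤ n → ∃ c : ℕ → ℕ,
      (alphaK ω k : ℤ) * ω k = ∑ j ∈ Finset.range k, (c j : ℤ) * ω j) :
    ∀ j, j ≤ n + 1 → ∀ c : ℕ → ℕ, ∃ b : ℕ → ℕ,
      (∀ i, 1 ≤ i → i < j → b i < alphaK ω i) ∧
      ∑ i ∈ Finset.range j, (b i : ℤ) * ω i = ∑ i ∈ Finset.range j, (c i : ℤ) * ω i := by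
  intro j
  induction j with
  | zero => intro _ c; exact ⟨c, fun i h1 h2 => by omega, rfl⟩
  | succ j ih =>
    intro hj c
    rcases Nat.eq_zero_or_pos j with hj0 | hj0
    · subst hj0
      exact ⟨c, fun i h1 h2 => by omega, rfl⟩
    -- j ≥ 1, j ≤ n
    obtain ⟨a, ha⟩ := halg j hj0 (by omega)
    have hαpos : 0 < alphaK ω j := by
      obtain ⟨j', rfl⟩ : ∃ j', j = j' + 1 := ⟨j - 1, by omega⟩
      exact alpha_pos ω hω0 j'
    set q := c j / alphaK ω j with hq
    set r := c j % alphaK ω j with hr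
    obtain ⟨b, hb1, hb2⟩ := ih (by omega) (fun i => c i + q * a i)
    refine ⟨fun i => if i = j then r else b i, ?_, ?_⟩
    · intro i h1 h2
      by_cases hij : i = j
      · simp [hij]; exact Nat.mod_lt _ hαpos
      · simp [hij]; exact hb1 i h1 (by omega)
    · rw [Finset.sum_range_succ, Finset.sum_range_succ]
      have hterms : ∑ i ∈ Finset.range j, ((if i = j then (r:ℤ) else b i)) * ω i
          = ∑ i ∈ Finset.range j, (b i : ℤ) * ω i := by
        apply Finset.sum_congr rfl
        intro i hi
        simp at hi
        simp [Nat.ne_of_lt hi]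
      have key : ∑ i ∈ Finset.range j, ((c i : ℤ) + q * a i) * ω i
          = ∑ i ∈ Finset.range j, (c i : ℤ) * ω i + (q : ℤ) * ((alphaK ω j : ℤ) * ω j) := by
        rw [ha, Finset.mul_sum, ← Finset.sum_add_distrib]
        apply Finset.sum_congr rfl
        intro i _
        ring
      have hcjN : alphaK ω j * q + r = c j := Nat.div_add_mod (c j) (alphaK ω j)
      have hcj : (c j : ℤ) = (q : ℤ) * (alphaK ω j : ℤ) + r := by
        have h2 : (alphaK ω j : ℤ) * q + r = c j := by exact_mod_cast hcjN
        linarith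
      push_cast at hb2 key ⊢
      simp only [if_pos rfl]
      rw [hterms, hb2, key, hcj]
      simp only [if_true]
      ring

/-- For a primitive algebraic key sequence, in the unique representation
`α_k·ω_k = Σ_{j=0}^{k−1} β_{k,j}·ω_j` with `0 ≤ β_{k,j} < α_j` for `1 ≤ j ≤ k−1`,
the coefficient `β_{k,0}` is nonnegative. -/
theorem stmt1 (n : ℕ) (ω : ℕ → ℤ) (hω : IsKeySequence n ω)
    (hprim : IsPrimitive n ω) (halg : IsAlgebraicKeySeq n ω)
    (k : ℕ) (hk1 : 1 ≤ k) (hkn : k ≤ n) (β : ℕ → ℤ)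
    (hβ : ∀ j, 1 ≤ j → j < k → 0 ≤ β j ∧ β j < (alphaK ω j : ℤ))
    (hrep : (alphaK ω k : ℤ) * ω k = ∑ j ∈ Finset.range k, β j * ω j) :
    0 ≤ β 0 := by
  have hω0 : 1 ≤ ω 0 := hω.1
  obtain ⟨c, hc⟩ := halg k hk1 hkn
  obtain ⟨b, hb1, hb2⟩ := reduce n ω hω0 halg k (by omega) c
  have hzero : ∑ j ∈ Finset.range k, (β j - (b j : ℤ)) * ω j = 0 := by
    have : ∑ j ∈ Finset.range k, β j * ω j = ∑ j ∈ Finset.range k, (b j : ℤ) * ω j := by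
      rw [← hrep, hb2, hc]
    simp only [sub_mul, Finset.sum_sub_distrib]
    omega
  have hsmall : ∀ j, 1 ≤ j → j < k → (β j - (b j : ℤ)).natAbs < alphaK ω j := by
    intro j h1 h2
    have h3 := hβ j h1 h2
    have h4 := hb1 j h1 h2
    omega
  have h0 := sum_zero ω hω0 k (fun j => β j - (b j : ℤ)) hsmall hzero 0 (by omega)
  omega
end

section
/- Let ω = (ω₀, …, ω_{n+1}) be a key sequence, θ = (θ₁, …, θ_n) ∈ (ℂ*)ⁿ, and g₀, …, g_{n+1} ∈ R := ℂ[x, x⁻¹, y] the associated key forms. Then the family 𝓑 := { g₀^{β₀}·g₁^{β₁}⋯g_{n+1}^{β_{n+1}} : β₀ ∈ ℤ, 0 ≤ β_j < α_j for 1 ≤ j ≤ n, β_{n+1} ∈ ℤ_{≥0} } is a ℂ-vector-space basis of R. -/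
/-- `β k` is, for `1 ≤ k ≤ n`, the unique representation tuple of `α_k·ω_k`:
`0 ≤ β_{k,j} < α_j` for `1 ≤ j ≤ k−1` and `α_k·ω_k = Σ_{j=0}^{k−1} β_{k,j}·ω_j`. -/
def IsRepTuple (n : ℕ) (ω : ℕ → ℤ) (β : ℕ → ℕ → ℤ) : Prop :=
  ∀ k, 1 ≤ k → k ≤ n →
    (∀ j, 1 ≤ j → j < k → 0 ≤ β k j ∧ β k j < (alphaK ω j : ℤ)) ∧
      (alphaK ω k : ℤ) * ω k = ∑ j ∈ Finset.range k, β k j * ω j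

/-- The ring `R = ℂ[x, x⁻¹, y]`, realized as polynomials in `y` over Laurent
polynomials in `x`:  `x` is `C (T 1)` and `y` is `X`. -/
abbrev RR : Type := Polynomial (LaurentPolynomial ℂ)

/-- `g 0, …, g (n+1)` are the key forms associated to the key sequence `ω`,
`θ ∈ (ℂ*)ⁿ` and the representation tuples `β`:  `g₀ = x`, `g₁ = y` and
`g_{k+1} = g_k^{α_k} − θ_k·x^{β_{k,0}}·g₁^{β_{k,1}}⋯g_{k−1}^{β_{k,k−1}}` for `1 ≤ k ≤ n`
(the possibly negative power `g₀^{β_{k,0}}` is the Laurent monomial `T (β_{k,0})`). -/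
def KeyForms (n : ℕ) (ω : ℕ → ℤ) (θ : ℕ → ℂ) (β : ℕ → ℕ → ℤ) (g : ℕ → RR) : Prop :=
  g 0 = Polynomial.C (LaurentPolynomial.T 1) ∧ g 1 = Polynomial.X ∧
    ∀ k, 1 ≤ k → k ≤ n →
      g (k + 1) = g k ^ alphaK ω k -
        Polynomial.C (LaurentPolynomial.C (θ k) * LaurentPolynomial.T (β k 0)) *
          ∏ j ∈ Finset.Ico 1 k, g j ^ (β k j).toNat

/-- The family `𝓑`: indexed by `(β₀, (β₁,…,β_n), β_{n+1}) ∈ ℤ × ∏_j Fin α_j × ℕ`,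
the element `g₀^{β₀}·g₁^{β₁}⋯g_n^{β_n}·g_{n+1}^{β_{n+1}}` of `R` (again `g₀^{β₀}` with
`β₀ ∈ ℤ` is the Laurent monomial `T β₀`). -/
noncomputable def Bfam (n : ℕ) (ω : ℕ → ℤ) (g : ℕ → RR) :
    ℤ × ((j : Fin n) → Fin (alphaK ω ((j : ℕ) + 1))) × ℕ → RR :=
  fun p =>
    Polynomial.C (LaurentPolynomial.T p.1) *
      (∏ j : Fin n, g ((j : ℕ) + 1) ^ (p.2.1 j : ℕ)) * g (n + 1) ^ p.2.2


open Polynomial LaurentPolynomial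

noncomputable section


abbrev LL := LaurentPolynomial ℂ

lemma smul_T (c : ℂ) (a : ℤ) : c • (T a : LL) = AddMonoidAlgebra.ofCoeff (Finsupp.single a c) := by
  show AddMonoidAlgebra.ofCoeff (c • (Finsupp.single a (1:ℂ))) = _
  rw [Finsupp.smul_single', mul_one]

lemma T_decomp (r : LL) : r = ∑ a ∈ r.coeff.support, (r.coeff a) • (T a : LL) := by
  simp only [smul_T]
  conv_lhs => rw [← AddMonoidAlgebra.ofCoeff_coeff r, ← Finsupp.sum_single r.coeff]
  rw [Finsupp.sum, AddMonoidAlgebra.ofCoeff_sum]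

lemma li_aux (F : ℤ × ℕ → Polynomial LL)
    (hdeg : ∀ a N, (F (a,N)).natDegree = N)
    (hcoeff : ∀ a N, (F (a,N)).coeff N = T a) :
    ∀ (m : ℕ) (s : Finset (ℤ × ℕ)), s.card ≤ m → ∀ c : ℤ × ℕ → ℂ,
      ∑ i ∈ s, c i • F i = 0 → ∀ i ∈ s, c i = 0 := by
  classical
  intro m
  induction m with
  | zero =>
    intro s hs c _ i hi
    rw [Nat.le_zero, Finset.card_eq_zero] at hs
    simp [hs] at hi
  | succ m ih =>
    intro s hs c hsum i hi
    have hne : s.Nonempty := ⟨i, hi⟩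
    set N := s.sup (fun p => p.2) with hN
    set sN := s.filter (fun p => p.2 = N) with hsN
    -- sN is nonempty
    obtain ⟨i₀, hi₀, hi₀N⟩ := Finset.exists_mem_eq_sup s hne (fun p => p.2)
    have hi₀sN : i₀ ∈ sN := Finset.mem_filter.mpr ⟨hi₀, hi₀N.symm⟩
    -- the coefficient of the sum at degree N
    have h2 : ∑ p ∈ sN, AddMonoidAlgebra.ofCoeff (Finsupp.single p.1 (c p)) = (0 : LL) := by
      have h0 := congrArg (fun q => Polynomial.coeff q N) hsum
      simp only [Polynomial.finset_sum_coeff, Polynomial.coeff_smul, Polynomial.coeff_zero] at h0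
      rw [← Finset.sum_filter_add_sum_filter_not s (fun p => p.2 = N)] at h0
      have hz : ∑ p ∈ s.filter (fun p => ¬ p.2 = N), c p • (F p).coeff N = 0 := by
        apply Finset.sum_eq_zero
        intro p hp
        rw [Finset.mem_filter] at hp
        have hle : p.2 ≤ N := Finset.le_sup (f := fun p => p.2) hp.1
        have : (F p).coeff N = 0 := by
          apply Polynomial.coeff_eq_zero_of_natDegree_lt
          rw [show F p = F (p.1, p.2) from by rfl, hdeg]
          omega
        rw [this, smul_zero]
      rw [hz, add_zero] at h0
      rw [← h0]
      apply Finset.sum_congr rfl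
      intro p hp
      rw [Finset.mem_filter] at hp
      rw [show F p = F (p.1, p.2) from by rfl, hp.2, hcoeff, smul_T]
    -- so c vanishes on sN
    have h3 : ∀ p ∈ sN, c p = 0 := by
      intro p hp
      rw [← AddMonoidAlgebra.ofCoeff_sum, AddMonoidAlgebra.ofCoeff_eq_zero] at h2
      have h4 := DFunLike.congr_fun h2 p.1
      rw [Finset.sum_apply'] at h4
      rw [Finset.sum_eq_single p] at h4
      · rwa [Finsupp.single_apply, if_pos rfl] at h4
      · intro q hq hqp
        rw [Finsupp.single_apply, if_neg]
        intro hq1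
        apply hqp
        have hq2 := (Finset.mem_filter.mp hq).2
        have hp2 := (Finset.mem_filter.mp hp).2
        exact Prod.ext hq1 (hq2.trans hp2.symm)
      · intro h; exact absurd hp h
    -- remove sN and use induction
    by_cases hiN : i ∈ sN
    · exact h3 i hiN
    · have hsub : s.filter (fun p => ¬ p.2 = N) ⊆ s := Finset.filter_subset _ _
      apply ih (s.filter (fun p => ¬ p.2 = N)) ?_ c ?_ i ?_
      · have hlt : (s.filter (fun p => ¬ p.2 = N)).card < s.card := by
          apply Finset.card_lt_card
          refine ⟨hsub, fun hss => ?_⟩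
          have h6 := hss hi₀
          rw [Finset.mem_filter] at h6
          exact h6.2 hi₀N.symm
        omega
      · have h5 : ∑ p ∈ sN, c p • F p + ∑ p ∈ s.filter (fun p => ¬ p.2 = N), c p • F p
            = ∑ p ∈ s, c p • F p :=
          Finset.sum_filter_add_sum_filter_not s (fun p => p.2 = N) (fun p => c p • F p)
        have hz2 : ∑ p ∈ sN, c p • F p = 0 := by
          apply Finset.sum_eq_zero
          intro p hp
          rw [h3 p hp, zero_smul]
        rw [← h5, hz2, zero_add] at hsum
        exact hsum
      · rw [Finset.mem_filter]
        refine ⟨hi, fun h => hiN (Finset.mem_filter.mpr ⟨hi, h⟩)⟩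

lemma span_aux (F : ℤ × ℕ → Polynomial LL)
    (hdeg : ∀ a N, (F (a,N)).natDegree = N)
    (hcoeff : ∀ a N, (F (a,N)).coeff N = T a) :
    ∀ (n : ℕ) (p : Polynomial LL), p.natDegree ≤ n →
      p ∈ Submodule.span ℂ (Set.range F) := by
  intro n
  induction n using Nat.strong_induction_on with
  | _ n ih =>
    intro p hp
    set r := p.coeff n with hr
    have hmem : ∑ a ∈ r.coeff.support, (r.coeff a) • F (a, n) ∈ Submodule.span ℂ (Set.range F) :=
      Submodule.sum_mem _ (fun a _ =>
        Submodule.smul_mem _ _ (Submodule.subset_span ⟨(a,n), rfl⟩))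
    set q := p - ∑ a ∈ r.coeff.support, (r.coeff a) • F (a, n) with hq
    have hqc : ∀ k, n ≤ k → q.coeff k = 0 := by
      intro k hk
      rw [hq, Polynomial.coeff_sub, Polynomial.finset_sum_coeff]
      rcases eq_or_lt_of_le hk with hk | hk
    /- k = n -/
      · subst hk
        simp only [Polynomial.coeff_smul, hcoeff, smul_T]
        rw [← hr, sub_eq_zero]
        conv_lhs => rw [T_decomp r]
        simp only [smul_T]
      · have h1 : p.coeff k = 0 :=
          Polynomial.coeff_eq_zero_of_natDegree_lt (lt_of_le_of_lt hp hk)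
        have h2 : ∀ a ∈ r.coeff.support, ((r.coeff a) • F (a, n)).coeff k = 0 := by
          intro a _
          rw [Polynomial.coeff_smul,
            Polynomial.coeff_eq_zero_of_natDegree_lt (by rw [hdeg]; exact hk), smul_zero]
        rw [h1, Finset.sum_eq_zero h2, sub_zero]
    by_cases hq0 : q = 0
    · have hpq : p = ∑ a ∈ r.coeff.support, (r.coeff a) • F (a, n) := by
        rw [← sub_eq_zero]; exact hq0
      rw [hpq]; exact hmem
    · have hlt : q.natDegree < n := by
        by_contra h
        push_neg at h
        have := hqc q.natDegree h
        rw [Polynomial.coeff_natDegree] at this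
        exact hq0 (Polynomial.leadingCoeff_eq_zero.mp this)
      have hqmem := ih q.natDegree hlt q le_rfl
      have hpq : p = q + ∑ a ∈ r.coeff.support, (r.coeff a) • F (a, n) := by
        rw [hq]; ring
      rw [hpq]
      exact Submodule.add_mem _ hqmem hmem

theorem triangular (F : ℤ × ℕ → Polynomial LL)
    (hdeg : ∀ a N, (F (a,N)).natDegree = N)
    (hcoeff : ∀ a N, (F (a,N)).coeff N = T a) :
    LinearIndependent ℂ F ∧ Submodule.span ℂ (Set.range F) = ⊤ := by
  constructor
  · rw [linearIndependent_iff']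
    intro s c h i hi
    exact li_aux F hdeg hcoeff s.card s le_rfl c h i hi
  · rw [eq_top_iff]
    intro p _
    exact span_aux F hdeg hcoeff p.natDegree p le_rfl

lemma dks_pos_s2 (ω : ℕ → ℤ) (h0 : 1 ≤ ω 0) (k : ℕ) : 1 ≤ dks ω k := by
  rw [Nat.one_le_iff_ne_zero]
  intro h
  have hd : dks ω k ∣ (ω 0).natAbs :=
    Finset.gcd_dvd (Finset.mem_range.mpr (Nat.succ_pos k))
  rw [h, zero_dvd_iff, Int.natAbs_eq_zero] at hd
  omega

lemma alphaK_pos (ω : ℕ → ℤ) (h0 : 1 ≤ ω 0) (k : ℕ) (hk : 1 ≤ k) : 1 ≤ alphaK ω k := by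
  have hdvd : dks ω k ∣ dks ω (k - 1) := by
    apply Finset.dvd_gcd
    intro j hj
    apply Finset.gcd_dvd
    rw [Finset.mem_range] at hj ⊢
    omega
  rw [alphaK, Nat.one_le_div_iff (dks_pos_s2 ω h0 k)]
  exact Nat.le_of_dvd (dks_pos_s2 ω h0 (k - 1)) hdvd

/-- `Dd ω k` is the `y`-degree of the key form `g k`. -/
def Dd (ω : ℕ → ℤ) (k : ℕ) : ℕ := ∏ j ∈ Finset.Ico 1 k, alphaK ω j

lemma Dd_pos (ω : ℕ → ℤ) (h0 : 1 ≤ ω 0) (k : ℕ) : 1 ≤ Dd ω k :=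
  Finset.one_le_prod' fun j hj => alphaK_pos ω h0 j (Finset.mem_Ico.mp hj).1

lemma Dd_succ (ω : ℕ → ℤ) (k : ℕ) (hk : 1 ≤ k) :
    Dd ω (k + 1) = Dd ω k * alphaK ω k := Finset.prod_Ico_succ_top hk _

lemma telescope (ω : ℕ → ℤ) (h0 : 1 ≤ ω 0) :
    ∀ k, 1 ≤ k → ∑ j ∈ Finset.Ico 1 k, (alphaK ω j - 1) * Dd ω j = Dd ω k - 1 := by
  intro k
  induction k with
  | zero => omega
  | succ k ih =>
    intro _
    by_cases hk : 1 ≤ k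
    · rw [Finset.sum_Ico_succ_top hk, ih hk, Dd_succ ω k hk]
      have h1 : (alphaK ω k - 1) * Dd ω k = alphaK ω k * Dd ω k - Dd ω k := by rw [Nat.sub_mul, Nat.one_mul]
      have h2 : Dd ω k ≤ alphaK ω k * Dd ω k :=
        Nat.le_mul_of_pos_left _ (alphaK_pos ω h0 k hk)
      have h3 : alphaK ω k * Dd ω k = Dd ω k * alphaK ω k := Nat.mul_comm _ _
      have h4 := Dd_pos ω h0 k
      omega
    · have hk0 : k = 0 := by omega
      subst hk0
      simp [Dd]

lemma gmd (n : ℕ) (ω : ℕ → ℤ) (θ : ℕ → ℂ) (β : ℕ → ℕ → ℤ) (g : ℕ → RR)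
    (h0 : 1 ≤ ω 0) (hβ : IsRepTuple n ω β) (hg : KeyForms n ω θ β g) :
    ∀ k, 1 ≤ k → k ≤ n + 1 → (g k).Monic ∧ (g k).natDegree = Dd ω k := by
  intro k
  induction k using Nat.strong_induction_on with
  | _ k ih =>
    intro hk1 hkn
    rcases k with _ | (_ | m)
    · omega
    · rw [hg.2.1]
      exact ⟨Polynomial.monic_X, by simp [Dd, Polynomial.natDegree_X]⟩
    · have hm1 : 1 ≤ m + 1 := by omega
      have hmn : m + 1 ≤ n := by omega
      have hrec := hg.2.2 (m + 1) hm1 hmn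
      have hgm := ih (m + 1) (by omega) hm1 (by omega)
      have hA : (g (m + 1) ^ alphaK ω (m + 1)).Monic := hgm.1.pow _
      have hAdeg : (g (m + 1) ^ alphaK ω (m + 1)).natDegree
          = alphaK ω (m + 1) * Dd ω (m + 1) := by
        rw [hgm.1.natDegree_pow, hgm.2]
      have hBdeg : (Polynomial.C (LaurentPolynomial.C (θ (m+1)) * LaurentPolynomial.T (β (m+1) 0)) *
          ∏ j ∈ Finset.Ico 1 (m+1), g j ^ (β (m+1) j).toNat).natDegree ≤ Dd ω (m + 1) - 1 := by
        calc (Polynomial.C (LaurentPolynomial.C (θ (m+1)) * LaurentPolynomial.T (β (m+1) 0)) *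
                ∏ j ∈ Finset.Ico 1 (m+1), g j ^ (β (m+1) j).toNat).natDegree
            ≤ (∏ j ∈ Finset.Ico 1 (m+1), g j ^ (β (m+1) j).toNat).natDegree :=
              Polynomial.natDegree_C_mul_le _ _
          _ ≤ ∑ j ∈ Finset.Ico 1 (m+1), (g j ^ (β (m+1) j).toNat).natDegree :=
              Polynomial.natDegree_prod_le _ _
          _ ≤ ∑ j ∈ Finset.Ico 1 (m+1), (alphaK ω j - 1) * Dd ω j := ?_
          _ = Dd ω (m + 1) - 1 := telescope ω h0 (m + 1) hm1
        apply Finset.sum_le_sum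
        intro j hj
        rw [Finset.mem_Ico] at hj
        have hgj := ih j (by omega) hj.1 (by omega)
        rw [hgj.1.natDegree_pow, hgj.2]
        apply Nat.mul_le_mul_right
        have hβj := (hβ (m + 1) hm1 hmn).1 j hj.1 hj.2
        have hα := alphaK_pos ω h0 j hj.1
        omega
      have hlt : (Polynomial.C (LaurentPolynomial.C (θ (m+1)) * LaurentPolynomial.T (β (m+1) 0)) *
          ∏ j ∈ Finset.Ico 1 (m+1), g j ^ (β (m+1) j).toNat).natDegree
            < (g (m + 1) ^ alphaK ω (m + 1)).natDegree := by
        rw [hAdeg]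
        have hD := Dd_pos ω h0 (m + 1)
        have hle : Dd ω (m + 1) ≤ alphaK ω (m + 1) * Dd ω (m + 1) :=
          Nat.le_mul_of_pos_left _ (alphaK_pos ω h0 (m + 1) hm1)
        omega
      have hdeglt : (Polynomial.C (LaurentPolynomial.C (θ (m+1)) * LaurentPolynomial.T (β (m+1) 0)) *
          ∏ j ∈ Finset.Ico 1 (m+1), g j ^ (β (m+1) j).toNat).degree
            < (g (m + 1) ^ alphaK ω (m + 1)).degree := by
        apply lt_of_le_of_lt Polynomial.degree_le_natDegree
        rw [Polynomial.degree_eq_natDegree hA.ne_zero]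
        exact_mod_cast hlt
      rw [hrec]
      refine ⟨hA.sub_of_left hdeglt, ?_⟩
      rw [Polynomial.natDegree_sub_eq_left_of_natDegree_lt hlt, hAdeg,
        Dd_succ ω (m + 1) hm1, Nat.mul_comm]

lemma mixed_bij : ∀ (n : ℕ) (r : ℕ → ℕ), (∀ j, 1 ≤ r j) →
    Function.Bijective (fun p : ((j : Fin n) → Fin (r (j : ℕ))) × ℕ =>
      (∑ j : Fin n, (p.1 j : ℕ) * ∏ i ∈ Finset.range (j : ℕ), r i)
        + p.2 * ∏ i ∈ Finset.range n, r i) := by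
  intro n
  induction n with
  | zero =>
    intro r hr
    constructor
    · rintro ⟨b, m⟩ ⟨b', m'⟩ h
      simp only [Finset.univ_eq_empty, Finset.sum_empty, Finset.range_zero,
        Finset.prod_empty, Nat.mul_one, Nat.zero_add] at h
      exact Prod.ext (funext fun j => j.elim0) h
    · intro N
      exact ⟨⟨fun j => j.elim0, N⟩, by simp⟩
  | succ n ih =>
    intro r hr
    have hb := ih r hr
    -- the "peel off the last digit" map
    set ψ : ((j : Fin (n + 1)) → Fin (r (j : ℕ))) × ℕ → ((j : Fin n) → Fin (r (j : ℕ))) × ℕ :=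
      fun p => (fun j => p.1 j.castSucc, (p.1 (Fin.last n) : ℕ) + p.2 * r n) with hψ
    have hψbij : Function.Bijective ψ := by
      constructor
      · rintro ⟨b, m⟩ ⟨b', m'⟩ h
        rw [Prod.mk.injEq] at h
        obtain ⟨h1, h2⟩ := h
        dsimp only at h1 h2
        have hlt := (b (Fin.last n)).isLt
        have hlt' := (b' (Fin.last n)).isLt
        simp only [Fin.val_last] at hlt hlt'
        have hmod := congrArg (· % r n) h2
        simp only [Nat.add_mul_mod_self_right] at hmod
        rw [Nat.mod_eq_of_lt hlt, Nat.mod_eq_of_lt hlt'] at hmod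
        have hm : m = m' := by
          have h3 : m * r n = m' * r n := by omega
          exact Nat.eq_of_mul_eq_mul_right (hr n) h3
        refine Prod.ext (funext fun j => ?_) hm
        refine Fin.lastCases ?_ ?_ j
        · exact Fin.ext hmod
        · intro i
          exact congrFun h1 i
      · rintro ⟨b', M⟩
        have hx : M % r n < r n := Nat.mod_lt _ (hr n)
        refine ⟨⟨Fin.snoc b' ⟨M % r n, hx⟩, M / r n⟩, ?_⟩
        simp only [hψ]
        refine Prod.ext (funext fun j => ?_) ?_
        · show (Fin.snoc b' ⟨M % r n, hx⟩ : (j : Fin (n+1)) → Fin (r (j : ℕ))) j.castSucc = b' j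
          exact Fin.snoc_castSucc _ _ _
        · show ((Fin.snoc b' ⟨M % r n, hx⟩ : (j : Fin (n+1)) → Fin (r (j : ℕ))) (Fin.last n) : ℕ)
            + M / r n * r n = M
          rw [Fin.snoc_last]
          exact Nat.mod_add_div' M (r n)
    have hcomp : (fun p : ((j : Fin (n + 1)) → Fin (r (j : ℕ))) × ℕ =>
        (∑ j : Fin (n + 1), (p.1 j : ℕ) * ∏ i ∈ Finset.range (j : ℕ), r i)
          + p.2 * ∏ i ∈ Finset.range (n + 1), r i)
        = (fun p : ((j : Fin n) → Fin (r (j : ℕ))) × ℕ =>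
          (∑ j : Fin n, (p.1 j : ℕ) * ∏ i ∈ Finset.range (j : ℕ), r i)
            + p.2 * ∏ i ∈ Finset.range n, r i) ∘ ψ := by
      funext p
      simp only [Function.comp_apply, hψ, Fin.sum_univ_castSucc, Fin.coe_castSucc,
        Fin.val_last, Finset.prod_range_succ]
      ring
    rw [hcomp]
    exact Function.Bijective.comp hb hψbij


/-- The family `𝓑` is a `ℂ`-vector-space basis of `R = ℂ[x, x⁻¹, y]`. -/
theorem stmt2 (n : ℕ) (ω : ℕ → ℤ) (θ : ℕ → ℂ) (β : ℕ → ℕ → ℤ) (g : ℕ → RR)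
    (hω : IsKeySequence n ω) (hθ : ∀ k, 1 ≤ k → k ≤ n → θ k ≠ 0)
    (hβ : IsRepTuple n ω β) (hg : KeyForms n ω θ β g) :
    LinearIndependent ℂ (Bfam n ω g) ∧
      Submodule.span ℂ (Set.range (Bfam n ω g)) = ⊤ := by
  obtain ⟨h0, -, -⟩ := hω
  have hr : ∀ j, 1 ≤ alphaK ω (j + 1) := fun j => alphaK_pos ω h0 (j + 1) (by omega)
  have hbij := mixed_bij n (fun i => alphaK ω (i + 1)) hr
  set φ' : ((j : Fin n) → Fin (alphaK ω ((j : ℕ) + 1))) × ℕ → ℕ :=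
    fun p => (∑ j : Fin n, (p.1 j : ℕ) * ∏ i ∈ Finset.range (j : ℕ), alphaK ω (i + 1))
      + p.2 * ∏ i ∈ Finset.range n, alphaK ω (i + 1) with hφ'
  have hbij' : Function.Bijective φ' := hbij
  set e := Equiv.ofBijective φ' hbij' with he
  have hDd : ∀ j : ℕ, (∏ i ∈ Finset.range j, alphaK ω (i + 1)) = Dd ω (j + 1) := by
    intro j
    rw [Dd, Finset.prod_Ico_eq_prod_range]
    simp only [Nat.add_sub_cancel]
    exact Finset.prod_congr rfl fun i _ => by rw [Nat.add_comm]
  have hGkey : ∀ p : ((j : Fin n) → Fin (alphaK ω ((j : ℕ) + 1))) × ℕ,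
      ((∏ j : Fin n, g ((j : ℕ) + 1) ^ ((p.1 j : ℕ))) * g (n + 1) ^ p.2).Monic ∧
      ((∏ j : Fin n, g ((j : ℕ) + 1) ^ ((p.1 j : ℕ))) * g (n + 1) ^ p.2).natDegree = φ' p := by
    intro p
    have hmon : ∀ j : Fin n, (g ((j : ℕ) + 1)).Monic ∧
        (g ((j : ℕ) + 1)).natDegree = Dd ω ((j : ℕ) + 1) :=
      fun j => gmd n ω θ β g h0 hβ hg ((j : ℕ) + 1) (by omega) (by omega)
    have hgn := gmd n ω θ β g h0 hβ hg (n + 1) (by omega) (by omega)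
    have hprodmon : (∏ j : Fin n, g ((j : ℕ) + 1) ^ ((p.1 j : ℕ))).Monic :=
      Polynomial.monic_prod_of_monic _ _ fun j _ => (hmon j).1.pow _
    refine ⟨hprodmon.mul (hgn.1.pow _), ?_⟩
    rw [Polynomial.Monic.natDegree_mul hprodmon (hgn.1.pow _),
      Polynomial.natDegree_prod_of_monic _ _ (fun j _ => (hmon j).1.pow _),
      hgn.1.natDegree_pow, hgn.2, hφ']
    congr 1
    · refine Finset.sum_congr rfl fun j _ => ?_
      rw [(hmon j).1.natDegree_pow, (hmon j).2, hDd]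
    · rw [hDd]
  have hT0 : ∀ a : ℤ, (LaurentPolynomial.T a : LaurentPolynomial ℂ) ≠ 0 := by
    intro a
    show AddMonoidAlgebra.ofCoeff (Finsupp.single a (1 : ℂ)) ≠ 0
    intro h
    rw [AddMonoidAlgebra.ofCoeff_eq_zero] at h
    exact one_ne_zero (Finsupp.single_eq_zero.mp h)
  have key : ∀ (a : ℤ) p, (Bfam n ω g (a, p)).natDegree = φ' p ∧
      (Bfam n ω g (a, p)).coeff (φ' p) = LaurentPolynomial.T a := by
    intro a p
    obtain ⟨hm, hd⟩ := hGkey p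
    have hBf : Bfam n ω g (a, p)
        = Polynomial.C (LaurentPolynomial.T a) *
          ((∏ j : Fin n, g ((j : ℕ) + 1) ^ ((p.1 j : ℕ))) * g (n + 1) ^ p.2) := by
      simp only [Bfam]
      rw [mul_assoc]
    constructor
    · rw [hBf]
      apply le_antisymm
      · exact le_trans (Polynomial.natDegree_C_mul_le _ _) (le_of_eq hd)
      · apply Polynomial.le_natDegree_of_ne_zero
        rw [Polynomial.coeff_C_mul, ← hd, Polynomial.coeff_natDegree, hm.leadingCoeff, mul_one]
        exact hT0 a
    · rw [hBf, Polynomial.coeff_C_mul, ← hd, Polynomial.coeff_natDegree, hm.leadingCoeff,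
        mul_one]
  set F : ℤ × ℕ → RR := fun q => Bfam n ω g (q.1, e.symm q.2) with hF
  have hFdeg : ∀ a N, (F (a, N)).natDegree = N := by
    intro a N
    rw [hF, (key a (e.symm N)).1]
    exact e.apply_symm_apply N
  have hFco : ∀ a N, (F (a, N)).coeff N = LaurentPolynomial.T a := by
    intro a N
    have h1 := (key a (e.symm N)).2
    rw [hF]
    rwa [show φ' (e.symm N) = N from e.apply_symm_apply N] at h1
  obtain ⟨hLI, hSP⟩ := triangular F hFdeg hFco
  have hcomp : Bfam n ω g = F ∘ (Equiv.prodCongr (Equiv.refl ℤ) e) := by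
    funext p
    show Bfam n ω g p = Bfam n ω g (p.1, e.symm (e p.2))
    rw [e.symm_apply_apply]
  constructor
  · rw [hcomp]
    exact hLI.comp _ (Equiv.injective _)
  · rw [hcomp, Set.range_comp, Equiv.range_eq_univ, Set.image_univ]
    exact hSP

end
end
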